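/- Let n, m ≥ 1, s ≥ 2, w ≥ 1, and 1 ≤ t ≤ s. If the bit-vector testing problem with parameters n, m has (s,w,t)-certificates, then for every real δ with 0 < δ < 1, either t ≥ n^{1−δ}/(w + log₂ s) or t ≥ δ·m·log₂ n / log₂ s. -/

import Mathlib

/-- `f` has `(s,w,t)`-certificates: there is a code `T : Y → Σ^s` with alphabet
`Σ = {0,1}^w` such that for every query `x` and database `y` some set `P` of at
most `t` cells determines the answer `f (x, y)`. -/
def HasCertificates {X Y Z : Type*} (f : X × Y → Z) (s w t : ℕ) : Prop :=
  ∃ T : Y → Fin s → (Fin w → Bool),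
    ∀ x : X, ∀ y : Y, ∃ P : Finset (Fin s), P.card ≤ t ∧
      ∀ y' : Y, (∀ i ∈ P, T y' i = T y i) → f (x, y') = f (x, y)

/-- The bit-vector testing problem with parameters `n, m`: a database is a bit-vector
`y ∈ {0,1}^n`, a query is a pair `(u, v)` of an `m`-tuple of positions and a prediction,
and the answer is `1` iff `y (u j) = v j` for every `j`. -/
def bvTest (n m : ℕ) : ((Fin m → Fin n) × (Fin m → Bool)) × (Fin n → Bool) → Fin 2 :=
  fun p => if ∀ j : Fin m, p.2 (p.1.1 j) = p.1.2 j then 1 else 0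

section BVAux
open Finset

variable {n m s w t : ℕ}

open Classical in
noncomputable def fixSet (T : (Fin n → Bool) → Fin s → (Fin w → Bool))
    (y : Fin n → Bool) (P : Finset (Fin s)) : Finset (Fin n) :=
  Finset.univ.filter
    (fun i => ∀ y' : Fin n → Bool, (∀ j ∈ P, T y' j = T y j) → y' i = y i)

lemma mem_fixSet {T : (Fin n → Bool) → Fin s → (Fin w → Bool)}
    {y : Fin n → Bool} {P : Finset (Fin s)} {i : Fin n} :
    i ∈ fixSet T y P ↔ ∀ y' : Fin n → Bool, (∀ j ∈ P, T y' j = T y j) → y' i = y i := by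
  simp [fixSet]

lemma fixSet_mono {T : (Fin n → Bool) → Fin s → (Fin w → Bool)}
    {y : Fin n → Bool} {P P' : Finset (Fin s)} (h : P ⊆ P') :
    fixSet T y P ⊆ fixSet T y P' := by
  intro i hi
  rw [mem_fixSet] at hi ⊢
  exact fun y' h' => hi y' (fun j hj => h' j (h hj))

lemma certProp {T : (Fin n → Bool) → Fin s → (Fin w → Bool)}
    (hT : ∀ x : (Fin m → Fin n) × (Fin m → Bool), ∀ y : Fin n → Bool,
      ∃ P : Finset (Fin s), P.card ≤ t ∧
        ∀ y', (∀ i ∈ P, T y' i = T y i) → bvTest n m (x, y') = bvTest n m (x, y))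
    (hts : t ≤ s) (u : Fin m → Fin n) (y : Fin n → Bool) :
    ∃ P : Finset (Fin s), P.card = t ∧ ∀ j, u j ∈ fixSet T y P := by
  obtain ⟨P₀, hP₀, hc⟩ := hT (u, fun j => y (u j)) y
  obtain ⟨P, hsub, -, hcard⟩ := Finset.exists_subsuperset_card_eq (Finset.subset_univ P₀) hP₀
    (by simpa using hts)
  refine ⟨P, hcard, fun j => fixSet_mono hsub ?_⟩
  rw [mem_fixSet]
  intro y' h'
  have h1 := hc y' h'
  have h2 : bvTest n m ((u, fun j => y (u j)), y) = 1 := by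
    simp [bvTest]
  rw [h2] at h1
  simp only [bvTest] at h1
  split_ifs at h1 with h
  · exact h j
  · exact absurd h1 (by decide)

lemma stepA {T : (Fin n → Bool) → Fin s → (Fin w → Bool)} (hts : t ≤ s)
    (hprop : ∀ (u : Fin m → Fin n) (y : Fin n → Bool),
      ∃ P : Finset (Fin s), P.card = t ∧ ∀ j, u j ∈ fixSet T y P)
    (y : Fin n → Bool) :
    ∃ P : Finset (Fin s), P.card = t ∧ n ^ m ≤ (fixSet T y P).card ^ m * s.choose t := by
  classical
  let g : (Fin m → Fin n) → Finset (Fin s) := fun u => (hprop u y).choose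
  have hgcard : ∀ u, (g u).card = t := fun u => (hprop u y).choose_spec.1
  have hgfix : ∀ u j, u j ∈ fixSet T y (g u) := fun u => (hprop u y).choose_spec.2
  have hne : (Finset.univ.powersetCard t : Finset (Finset (Fin s))).Nonempty := by
    rw [Finset.powersetCard_nonempty]
    simpa using hts
  obtain ⟨P, hPmem, hPmax⟩ := Finset.exists_max_image _ (fun P => (fixSet T y P).card) hne
  refine ⟨P, by simpa using Finset.mem_powersetCard_univ.mp hPmem, ?_⟩
  have key : (Finset.univ : Finset (Fin m → Fin n)).card ≤
      (fixSet T y P).card ^ m * (Finset.univ.powersetCard t : Finset (Finset (Fin s))).card := by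
    apply Finset.card_le_mul_card_image_of_maps_to
      (fun u _ => Finset.mem_powersetCard_univ.mpr (hgcard u))
    intro Q hQ
    have h1 : ({u ∈ Finset.univ | g u = Q} : Finset (Fin m → Fin n)).card ≤
        (fixSet T y Q).card ^ m := by
      rw [← Fintype.card_coe]
      have : Fintype.card (Fin m → ↥(fixSet T y Q)) = (fixSet T y Q).card ^ m := by
        simp [Fintype.card_fun]
      rw [← this]
      let F : {u : Fin m → Fin n // u ∈ ({u ∈ Finset.univ | g u = Q} : Finset (Fin m → Fin n))} →
          (Fin m → ↥(fixSet T y Q)) := fun uu j => ⟨uu.1 j, by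
            have h := hgfix uu.1 j
            have hq : g uu.1 = Q := (Finset.mem_filter.mp uu.2).2
            rwa [hq] at h⟩
      apply Fintype.card_le_of_injective F
      intro u₁ u₂ h12
      apply Subtype.ext; funext j
      exact congrArg Subtype.val (congrFun h12 j)
    exact h1.trans (Nat.pow_le_pow_left (hPmax Q hQ) m)
  rwa [Finset.card_univ, Fintype.card_fun, Fintype.card_fin, Fintype.card_fin,
    Finset.card_powersetCard, Finset.card_univ, Fintype.card_fin] at key

lemma stepB {T : (Fin n → Bool) → Fin s → (Fin w → Bool)} (M₀ : ℕ) (hM₀n : M₀ ≤ n)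
    (Py : (Fin n → Bool) → Finset (Fin s)) (hc : ∀ y, (Py y).card = t)
    (hM : ∀ y, M₀ ≤ (fixSet T y (Py y)).card) :
    2 ^ M₀ ≤ s ^ t * 2 ^ (w * t) := by
  classical
  let e : (Fin n → Bool) → Fin t → Fin s := fun y k => ((Py y).orderIsoOfFin (hc y) k : Fin s)
  let Φ : (Fin n → Bool) → (Fin t → Fin s) × (Fin t → Fin w → Bool) :=
    fun y => (e y, fun k => T y (e y k))
  have key : (Finset.univ : Finset (Fin n → Bool)).card ≤
      2 ^ (n - M₀) *
        (Finset.univ : Finset ((Fin t → Fin s) × (Fin t → Fin w → Bool))).card := by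
    apply Finset.card_le_mul_card_image_of_maps_to (f := Φ) (fun y _ => Finset.mem_univ _)
    intro b _
    rcases Finset.eq_empty_or_nonempty ({y ∈ Finset.univ | Φ y = b} : Finset (Fin n → Bool))
      with he | ⟨y₀, hy₀⟩
    · simp [he]
    · have hy₀b : Φ y₀ = b := (Finset.mem_filter.mp hy₀).2
      have hagree : ∀ y ∈ ({y ∈ Finset.univ | Φ y = b} : Finset (Fin n → Bool)),
          ∀ i ∈ fixSet T y₀ (Py y₀), y i = y₀ i := by
        intro y hy i hi
        have hΦ : Φ y = Φ y₀ := (Finset.mem_filter.mp hy).2.trans hy₀b.symm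
        have he1 : e y = e y₀ := congrArg Prod.fst hΦ
        have he2 : ∀ k, T y (e y k) = T y₀ (e y₀ k) :=
          fun k => congrFun (congrArg Prod.snd hΦ) k
        have hT' : ∀ j ∈ Py y₀, T y j = T y₀ j := by
          intro j hj
          obtain ⟨k, hk⟩ : ∃ k, e y₀ k = j :=
            ⟨((Py y₀).orderIsoOfFin (hc y₀)).symm ⟨j, hj⟩, by
              show ((Py y₀).orderIsoOfFin (hc y₀)
                (((Py y₀).orderIsoOfFin (hc y₀)).symm ⟨j, hj⟩) : Fin s) = j
              rw [OrderIso.apply_symm_apply]⟩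
          calc T y j = T y (e y k) := by rw [congrFun he1 k, hk]
            _ = T y₀ (e y₀ k) := he2 k
            _ = T y₀ j := by rw [hk]
        exact mem_fixSet.mp hi y hT'
      have hinj : ({y ∈ Finset.univ | Φ y = b} : Finset (Fin n → Bool)).card ≤
          Fintype.card (↥((fixSet T y₀ (Py y₀))ᶜ) → Bool) := by
        rw [← Fintype.card_coe]
        let F : {y : Fin n → Bool // y ∈ ({y ∈ Finset.univ | Φ y = b} : Finset (Fin n → Bool))} →
            (↥((fixSet T y₀ (Py y₀))ᶜ) → Bool) := fun yy i => yy.1 i.1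
        apply Fintype.card_le_of_injective F
        intro y₁ y₂ h12
        apply Subtype.ext; funext i
        by_cases hiF : i ∈ fixSet T y₀ (Py y₀)
        · rw [hagree y₁.1 y₁.2 i hiF, hagree y₂.1 y₂.2 i hiF]
        · exact congrFun h12 ⟨i, Finset.mem_compl.mpr hiF⟩
      refine hinj.trans ?_
      have : Fintype.card (↥((fixSet T y₀ (Py y₀))ᶜ) → Bool) =
          2 ^ (n - (fixSet T y₀ (Py y₀)).card) := by
        simp [Fintype.card_fun, Finset.card_compl]
      rw [this]
      exact Nat.pow_le_pow_right (by norm_num) (Nat.sub_le_sub_left (hM y₀) n)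
  rw [Finset.card_univ, Fintype.card_fun, Fintype.card_bool, Fintype.card_fin,
    Finset.card_univ] at key
  have hcard : Fintype.card ((Fin t → Fin s) × (Fin t → Fin w → Bool)) =
      s ^ t * 2 ^ (w * t) := by
    rw [Fintype.card_prod, Fintype.card_fun, Fintype.card_fun, Fintype.card_fun,
      Fintype.card_bool, Fintype.card_fin, Fintype.card_fin, Fintype.card_fin, ← pow_mul]
  rw [hcard] at key
  have h2 : (2 : ℕ) ^ n = 2 ^ M₀ * 2 ^ (n - M₀) := by
    rw [← pow_add, Nat.add_sub_cancel' hM₀n]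
  rw [h2] at key
  have hpos : 0 < 2 ^ (n - M₀) := Nat.pow_pos (by norm_num)
  calc 2 ^ M₀ = 2 ^ M₀ * 2 ^ (n - M₀) / 2 ^ (n - M₀) := by
        rw [Nat.mul_div_cancel _ hpos]
    _ ≤ 2 ^ (n - M₀) * (s ^ t * 2 ^ (w * t)) / 2 ^ (n - M₀) := Nat.div_le_div_right key
    _ = s ^ t * 2 ^ (w * t) := by rw [mul_comm, Nat.mul_div_cancel _ hpos]

end BVAux

/-- Certificate lower bound for bit-vector testing: if it has `(s,w,t)`-certificates,
then for every `0 < δ < 1`, either `t ≥ n^{1−δ}/(w + log₂ s)` or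
`t ≥ δ·m·log₂ n / log₂ s`. -/
theorem bvTest_certificate_lower_bound (n m s w t : ℕ)
    (hn : 1 ≤ n) (hm : 1 ≤ m) (hs : 2 ≤ s) (hw : 1 ≤ w) (ht : 1 ≤ t) (hts : t ≤ s)
    (hcert : HasCertificates (bvTest n m) s w t) :
    ∀ δ : ℝ, 0 < δ → δ < 1 →
      (n : ℝ) ^ ((1 : ℝ) - δ) / ((w : ℝ) + Real.logb 2 s) ≤ (t : ℝ) ∨
      δ * m * Real.logb 2 n / Real.logb 2 s ≤ (t : ℝ) := by
  intro δ hδ0 hδ1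
  by_cases hcase : δ * m * Real.logb 2 n / Real.logb 2 s ≤ (t : ℝ)
  · exact Or.inr hcase
  left
  push_neg at hcase
  have h2lt : (1:ℝ) < 2 := by norm_num
  have hs0 : (0:ℝ) < s := by positivity
  have hn0 : (0:ℝ) < n := by exact_mod_cast hn
  have hn1 : (1:ℝ) ≤ n := by exact_mod_cast hn
  have hlogs0 : 0 < Real.logb 2 s := by
    apply Real.logb_pos h2lt
    exact_mod_cast hs
  have hmain : (t:ℝ) * Real.logb 2 s < δ * m * Real.logb 2 n :=
    (lt_div_iff₀ hlogs0).mp hcase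
  obtain ⟨T, hT⟩ := hcert
  have hAll : ∀ y : Fin n → Bool, ∃ P : Finset (Fin s), P.card = t ∧
      n ^ m ≤ (fixSet T y P).card ^ m * s.choose t :=
    fun y => stepA hts (fun u y => certProp hT hts u y) y
  set M₀ := ⌈(n:ℝ) ^ ((1:ℝ) - δ)⌉₊ with hM₀def
  -- every `y`'s chosen set has a large fix set
  have hfixbig : ∀ y : Fin n → Bool, M₀ ≤ (fixSet T y (hAll y).choose).card := by
    intro y
    obtain ⟨hcardP, hineq⟩ := (hAll y).choose_spec
    set Fc := (fixSet T y (hAll y).choose).card with hFcdef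
    have hFc0 : 0 < Fc := by
      rcases Nat.eq_zero_or_pos Fc with h0 | h
      · rw [h0, Nat.zero_pow (by omega), Nat.zero_mul] at hineq
        have : 0 < n ^ m := Nat.pow_pos hn
        omega
      · exact h
    have h1 : ((n:ℝ))^m ≤ (Fc:ℝ)^m * (s.choose t : ℝ) := by exact_mod_cast hineq
    have h2 : (s.choose t : ℝ) ≤ (s:ℝ)^t := by exact_mod_cast Nat.choose_le_pow s t
    have hst : (s:ℝ)^t < (n:ℝ) ^ (δ * m) := by
      have es : ((s:ℝ))^(t:ℕ) = (2:ℝ) ^ ((t:ℝ) * Real.logb 2 s) := by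
        rw [mul_comm, Real.rpow_mul (by norm_num : (0:ℝ) ≤ 2),
          Real.rpow_logb (by norm_num) (by norm_num) hs0, Real.rpow_natCast]
      have en : (n:ℝ) ^ (δ * m) = (2:ℝ) ^ (δ * m * Real.logb 2 n) := by
        conv_lhs => rw [← Real.rpow_logb (by norm_num : (0:ℝ) < 2) (by norm_num) hn0]
        rw [← Real.rpow_mul (by norm_num : (0:ℝ) ≤ 2), mul_comm (Real.logb 2 n)]
      rw [es, en]
      exact (Real.rpow_lt_rpow_left_iff h2lt).mpr hmain
    have hFcm0 : (0:ℝ) < (Fc:ℝ)^m := by positivity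
    have h3 : ((n:ℝ))^(m:ℕ) < (Fc:ℝ)^m * (n:ℝ)^(δ*m) :=
      lt_of_le_of_lt (h1.trans (mul_le_mul_of_nonneg_left h2 (le_of_lt hFcm0)))
        (mul_lt_mul_of_pos_left hst hFcm0)
    have edec : ((n:ℝ))^(m:ℕ) = (n:ℝ)^(((1:ℝ)-δ)*m) * (n:ℝ)^(δ*m) := by
      rw [← Real.rpow_natCast (n:ℝ) m, ← Real.rpow_add hn0]
      ring_nf
    rw [edec] at h3
    have hrp0 : (0:ℝ) < (n:ℝ)^(δ*m) := Real.rpow_pos_of_pos hn0 _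
    have h4 : (n:ℝ)^(((1:ℝ)-δ)*m) < (Fc:ℝ)^m := (mul_lt_mul_iff_left₀ hrp0).mp h3
    have e5 : (n:ℝ)^(((1:ℝ)-δ)*m) = ((n:ℝ)^((1:ℝ)-δ))^(m:ℕ) := by
      rw [Real.rpow_mul hn0.le, Real.rpow_natCast]
    have h6 : (n:ℝ)^((1:ℝ)-δ) < (Fc:ℝ) := by
      by_contra hle
      push_neg at hle
      have := pow_le_pow_left₀ (by positivity : (0:ℝ) ≤ (Fc:ℝ)) hle m
      rw [← e5] at this
      exact absurd h4 (not_lt.mpr this)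
    exact Nat.ceil_le.mpr h6.le
  have hM₀n : M₀ ≤ n := by
    apply Nat.ceil_le.mpr
    calc (n:ℝ)^((1:ℝ)-δ) ≤ (n:ℝ)^(1:ℝ) :=
          Real.rpow_le_rpow_of_exponent_le hn1 (by linarith)
      _ = n := Real.rpow_one _
  have hB : 2 ^ M₀ ≤ s ^ t * 2 ^ (w * t) :=
    stepB M₀ hM₀n (fun y => (hAll y).choose) (fun y => (hAll y).choose_spec.1) hfixbig
  -- take logs
  have hBR : ((2:ℝ)) ^ (M₀:ℕ) ≤ (s:ℝ)^t * (2:ℝ)^(w*t) := by exact_mod_cast hB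
  have hlog : (M₀:ℝ) ≤ t * Real.logb 2 s + w * t := by
    have l1 : Real.logb 2 ((2:ℝ)^(M₀:ℕ)) = M₀ := by
      rw [Real.logb_pow]
      simp
    have l2 : Real.logb 2 ((s:ℝ)^t * (2:ℝ)^(w*t)) = t * Real.logb 2 s + (w*t : ℕ) := by
      rw [Real.logb_mul (by positivity) (by positivity), Real.logb_pow, Real.logb_pow]
      simp
    have mono := Real.logb_le_logb_of_le h2lt (by positivity : (0:ℝ) < (2:ℝ)^(M₀:ℕ)) hBR
    rw [l1, l2] at mono
    calc (M₀:ℝ) ≤ t * Real.logb 2 s + (w*t : ℕ) := mono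
      _ = t * Real.logb 2 s + w * t := by push_cast; ring
  have hpos : (0:ℝ) < (w:ℝ) + Real.logb 2 s := by
    have : (0:ℝ) < w := by exact_mod_cast hw
    linarith
  rw [div_le_iff₀ hpos]
  calc (n:ℝ)^((1:ℝ)-δ) ≤ M₀ := Nat.le_ceil _
    _ ≤ t * Real.logb 2 s + w * t := hlog
    _ = t * (w + Real.logb 2 s) := by ring
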